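/- For H(x,y,p,q) := α·(2qy − p²)^{3/2}/y², with α ∈ ℝ a constant, on the domain where y ≠ 0 and 2qy − p² > 0, the Wünschmann invariant W(H) := 9 D D H_q − 27 D H_p − 18 H_q D H_q + 18 H_q H_p + 4 H_q³ + 54 H_y vanishes identically, where D := ∂_x + p∂_y + q∂_p + H∂_q. -/

import Mathlib

/-- Partial derivative in the `x` slot. -/
noncomputable def px (G : ℝ → ℝ → ℝ → ℝ → ℝ) : ℝ → ℝ → ℝ → ℝ → ℝ :=
  fun x y p q => deriv (fun s => G s y p q) x

/-- Partial derivative in the `y` slot. -/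
noncomputable def py (G : ℝ → ℝ → ℝ → ℝ → ℝ) : ℝ → ℝ → ℝ → ℝ → ℝ :=
  fun x y p q => deriv (fun s => G x s p q) y

/-- Partial derivative in the `p` slot. -/
noncomputable def pp (G : ℝ → ℝ → ℝ → ℝ → ℝ) : ℝ → ℝ → ℝ → ℝ → ℝ :=
  fun x y p q => deriv (fun s => G x y s q) p

/-- Partial derivative in the `q` slot. -/
noncomputable def pq (G : ℝ → ℝ → ℝ → ℝ → ℝ) : ℝ → ℝ → ℝ → ℝ → ℝ :=
  fun x y p q => deriv (fun s => G x y p s) q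

/-- The total differentiation operator `D = ∂x + p ∂y + q ∂p + H ∂q` associated
to the third-order ODE `y''' = H(x,y,y',y'')`. -/
noncomputable def DOp (H G : ℝ → ℝ → ℝ → ℝ → ℝ) : ℝ → ℝ → ℝ → ℝ → ℝ :=
  fun x y p q =>
    px G x y p q + p * py G x y p q + q * pp G x y p q + H x y p q * pq G x y p q

/-- The Wünschmann invariant
`W(H) = 9 D D H_q − 27 D H_p − 18 H_q D H_q + 18 H_q H_p + 4 H_q³ + 54 H_y`. -/
noncomputable def Wun (H : ℝ → ℝ → ℝ → ℝ → ℝ) : ℝ → ℝ → ℝ → ℝ → ℝ :=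
  fun x y p q =>
    9 * DOp H (DOp H (pq H)) x y p q
      - 27 * DOp H (pp H) x y p q
      - 18 * pq H x y p q * DOp H (pq H) x y p q
      + 18 * pq H x y p q * pp H x y p q
      + 4 * (pq H x y p q) ^ 3
      + 54 * py H x y p q

/-! ### Auxiliary closed forms -/

noncomputable def Hf (α : ℝ) : ℝ → ℝ → ℝ → ℝ → ℝ :=
  fun _ y p q => α * (2 * q * y - p ^ 2) ^ ((3 : ℝ) / 2) / y ^ 2

noncomputable def Af (α : ℝ) : ℝ → ℝ → ℝ → ℝ → ℝ :=
  fun _ y p q => 3 * α * Real.sqrt (2 * q * y - p ^ 2) / y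

noncomputable def Bf (α : ℝ) : ℝ → ℝ → ℝ → ℝ → ℝ :=
  fun _ y p q => -(3 * α * p * Real.sqrt (2 * q * y - p ^ 2)) / y ^ 2

noncomputable def Cf (α : ℝ) : ℝ → ℝ → ℝ → ℝ → ℝ :=
  fun _ y p q =>
    3 * α * Real.sqrt (2 * q * y - p ^ 2) * (α * Real.sqrt (2 * q * y - p ^ 2) - p) / y ^ 2

/-! ### Derivatives of the basic inner functions -/

lemma hder_uy (y p q : ℝ) : HasDerivAt (fun t : ℝ => 2 * q * t - p ^ 2) (2 * q) y := by
  simpa using ((hasDerivAt_id y).const_mul (2 * q)).sub_const (p ^ 2)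

lemma hder_up (y p q : ℝ) : HasDerivAt (fun t : ℝ => 2 * q * y - t ^ 2) (-(2 * p)) p := by
  simpa using (hasDerivAt_pow 2 p).const_sub (2 * q * y)

lemma hder_uq (y p q : ℝ) : HasDerivAt (fun t : ℝ => 2 * t * y - p ^ 2) (2 * y) q := by
  simpa using (((hasDerivAt_id q).const_mul 2).mul_const y).sub_const (p ^ 2)

lemma hder_sq (y : ℝ) : HasDerivAt (fun t : ℝ => t ^ 2) (2 * y) y := by
  simpa using hasDerivAt_pow 2 y

/-! ### Congruence lemmas for slot derivatives on the domain -/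

lemma py_congr (G F : ℝ → ℝ → ℝ → ℝ → ℝ) (x y p q : ℝ) (hy : y ≠ 0)
    (hu : 0 < 2 * q * y - p ^ 2)
    (h : ∀ t : ℝ, t ≠ 0 → 0 < 2 * q * t - p ^ 2 → G x t p q = F x t p q) :
    py G x y p q = py F x y p q := by
  have h1 : ∀ᶠ t in nhds y, t ≠ 0 := eventually_ne_nhds hy
  have hc : ContinuousAt (fun t : ℝ => 2 * q * t - p ^ 2) y := by fun_prop
  have h2 : ∀ᶠ t in nhds y, 0 < 2 * q * t - p ^ 2 := hc.eventually (eventually_gt_nhds hu)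
  simp only [py]
  exact Filter.EventuallyEq.deriv_eq (by filter_upwards [h1, h2] with t ht1 ht2 using h t ht1 ht2)

lemma pp_congr (G F : ℝ → ℝ → ℝ → ℝ → ℝ) (x y p q : ℝ)
    (hu : 0 < 2 * q * y - p ^ 2)
    (h : ∀ t : ℝ, 0 < 2 * q * y - t ^ 2 → G x y t q = F x y t q) :
    pp G x y p q = pp F x y p q := by
  have hc : ContinuousAt (fun t : ℝ => 2 * q * y - t ^ 2) p := by fun_prop
  have h2 : ∀ᶠ t in nhds p, 0 < 2 * q * y - t ^ 2 := hc.eventually (eventually_gt_nhds hu)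
  simp only [pp]
  exact Filter.EventuallyEq.deriv_eq (by filter_upwards [h2] with t ht2 using h t ht2)

lemma pq_congr (G F : ℝ → ℝ → ℝ → ℝ → ℝ) (x y p q : ℝ)
    (hu : 0 < 2 * q * y - p ^ 2)
    (h : ∀ t : ℝ, 0 < 2 * t * y - p ^ 2 → G x y p t = F x y p t) :
    pq G x y p q = pq F x y p q := by
  have hc : ContinuousAt (fun t : ℝ => 2 * t * y - p ^ 2) q := by fun_prop
  have h2 : ∀ᶠ t in nhds q, 0 < 2 * t * y - p ^ 2 := hc.eventually (eventually_gt_nhds hu)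
  simp only [pq]
  exact Filter.EventuallyEq.deriv_eq (by filter_upwards [h2] with t ht2 using h t ht2)

/-! ### First-order partial derivatives of `H` -/

lemma lHx (α x y p q : ℝ) : px (Hf α) x y p q = 0 := by
  simp [px, Hf]

lemma lHq (α x y p q : ℝ) (hy : y ≠ 0) : pq (Hf α) x y p q = Af α x y p q := by
  have h2 := (((hder_uq y p q).rpow_const (p := (3 : ℝ) / 2)
    (Or.inr (by norm_num))).const_mul α).div_const (y ^ 2)
  simp only [pq, Hf, Af]
  rw [h2.deriv, show (3 : ℝ) / 2 - 1 = 1 / 2 by norm_num, ← Real.sqrt_eq_rpow]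
  field_simp

lemma lHp (α x y p q : ℝ) (hy : y ≠ 0) : pp (Hf α) x y p q = Bf α x y p q := by
  have h2 := (((hder_up y p q).rpow_const (p := (3 : ℝ) / 2)
    (Or.inr (by norm_num))).const_mul α).div_const (y ^ 2)
  simp only [pp, Hf, Bf]
  rw [h2.deriv, show (3 : ℝ) / 2 - 1 = 1 / 2 by norm_num, ← Real.sqrt_eq_rpow]
  field_simp

lemma lHyv (α x y p q : ℝ) (hy : y ≠ 0) (hu : 0 < 2 * q * y - p ^ 2) :
    py (Hf α) x y p q =
      α * (3 * q * y - 2 * (2 * q * y - p ^ 2)) * Real.sqrt (2 * q * y - p ^ 2) / y ^ 3 := by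
  have hnum := ((hder_uy y p q).rpow_const (p := (3 : ℝ) / 2) (Or.inr (by norm_num))).const_mul α
  have h2 := hnum.div (hder_sq y) (pow_ne_zero 2 hy)
  simp only [py, Hf]
  rw [HasDerivAt.deriv (f := fun s => α * (2 * q * s - p ^ 2) ^ ((3 : ℝ) / 2) / s ^ 2) h2, show (3 : ℝ) / 2 - 1 = 1 / 2 by norm_num, ← Real.sqrt_eq_rpow,
    show (3 : ℝ) / 2 = 1 + 1 / 2 by norm_num, Real.rpow_add hu, Real.rpow_one,
    ← Real.sqrt_eq_rpow]
  field_simp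
  ring

lemma lHval (α x y p q : ℝ) (hu : 0 < 2 * q * y - p ^ 2) :
    Hf α x y p q =
      α * ((2 * q * y - p ^ 2) * Real.sqrt (2 * q * y - p ^ 2)) / y ^ 2 := by
  simp only [Hf]
  rw [show (3 : ℝ) / 2 = 1 + 1 / 2 by norm_num, Real.rpow_add hu, Real.rpow_one,
    ← Real.sqrt_eq_rpow]

/-! ### `D H_q` -/

lemma lDA (α x y p q : ℝ) (hy : y ≠ 0) (hu : 0 < 2 * q * y - p ^ 2) :
    DOp (Hf α) (pq (Hf α)) x y p q = Cf α x y p q := by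
  have hs0 : Real.sqrt (2 * q * y - p ^ 2) ≠ 0 := (Real.sqrt_pos.mpr hu).ne'
  have hys := (hder_uy y p q).sqrt hu.ne'
  have hps := (hder_up y p q).sqrt hu.ne'
  have hqs := (hder_uq y p q).sqrt hu.ne'
  have hx0 : px (pq (Hf α)) x y p q = 0 := by simp [px, pq, Hf]
  have hyc : py (pq (Hf α)) x y p q = py (Af α) x y p q :=
    py_congr _ _ x y p q hy hu (fun t ht hut => lHq α x t p q ht)
  have hpc : pp (pq (Hf α)) x y p q = pp (Af α) x y p q :=
    pp_congr _ _ x y p q hu (fun t hut => lHq α x y t q hy)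
  have hqc : pq (pq (Hf α)) x y p q = pq (Af α) x y p q :=
    pq_congr _ _ x y p q hu (fun t hut => lHq α x y p t hy)
  have hAy := (hys.const_mul (3 * α)).div (hasDerivAt_id' y) hy
  have hAp := (hps.const_mul (3 * α)).div_const y
  have hAq := (hqs.const_mul (3 * α)).div_const y
  simp only [DOp]
  rw [hx0, hyc, hpc, hqc, lHval α x y p q hu]
  simp only [py, pp, pq, Af, Cf]
  rw [HasDerivAt.deriv (f := fun s => 3 * α * Real.sqrt (2 * q * s - p ^ 2) / s) hAy, hAp.deriv, hAq.deriv]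
  have h2 : 2 * q * y - p ^ 2 = Real.sqrt (2 * q * y - p ^ 2) ^ 2 := (Real.sq_sqrt hu.le).symm
  set s := Real.sqrt (2 * q * y - p ^ 2) with hsdef
  rw [h2]
  field_simp
  ring

/-! ### `D H_p` -/

lemma lDB (α x y p q : ℝ) (hy : y ≠ 0) (hu : 0 < 2 * q * y - p ^ 2) :
    DOp (Hf α) (pp (Hf α)) x y p q =
      3 * α * (2 * p ^ 2 * Real.sqrt (2 * q * y - p ^ 2)
          - α * p * (2 * q * y - p ^ 2)
          - q * Real.sqrt (2 * q * y - p ^ 2) * y) / y ^ 3 := by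
  have hs0 : Real.sqrt (2 * q * y - p ^ 2) ≠ 0 := (Real.sqrt_pos.mpr hu).ne'
  have hys := (hder_uy y p q).sqrt hu.ne'
  have hps := (hder_up y p q).sqrt hu.ne'
  have hqs := (hder_uq y p q).sqrt hu.ne'
  have hx0 : px (pp (Hf α)) x y p q = 0 := by simp [px, pp, Hf]
  have hyc : py (pp (Hf α)) x y p q = py (Bf α) x y p q :=
    py_congr _ _ x y p q hy hu (fun t ht hut => lHp α x t p q ht)
  have hpc : pp (pp (Hf α)) x y p q = pp (Bf α) x y p q :=
    pp_congr _ _ x y p q hu (fun t hut => lHp α x y t q hy)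
  have hqc : pq (pp (Hf α)) x y p q = pq (Bf α) x y p q :=
    pq_congr _ _ x y p q hu (fun t hut => lHp α x y p t hy)
  have hBy := ((hys.const_mul (3 * α * p)).neg).div (hder_sq y) (pow_ne_zero 2 hy)
  have hmul : HasDerivAt (fun t : ℝ => 3 * α * t) (3 * α) p := by
    simpa using (hasDerivAt_id p).const_mul (3 * α)
  have hBp := (((hmul.mul hps)).neg).div_const (y ^ 2)
  have hBq := ((hqs.const_mul (3 * α * p)).neg).div_const (y ^ 2)
  simp only [DOp]
  rw [hx0, hyc, hpc, hqc, lHval α x y p q hu]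
  simp only [py, pp, pq, Bf]
  rw [HasDerivAt.deriv (f := fun s => -(3 * α * p * Real.sqrt (2 * q * s - p ^ 2)) / s ^ 2) hBy,
    HasDerivAt.deriv (f := fun s => -(3 * α * s * Real.sqrt (2 * q * y - s ^ 2)) / y ^ 2) hBp,
    HasDerivAt.deriv (f := fun s => -(3 * α * p * Real.sqrt (2 * s * y - p ^ 2)) / y ^ 2) hBq]
  simp only [Pi.neg_apply, Pi.mul_apply, Pi.sub_apply]
  have h2 : 2 * q * y - p ^ 2 = Real.sqrt (2 * q * y - p ^ 2) ^ 2 := (Real.sq_sqrt hu.le).symm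
  set s := Real.sqrt (2 * q * y - p ^ 2) with hsdef
  rw [h2]
  field_simp
  ring

/-! ### `D D H_q` -/

lemma lDDA (α x y p q : ℝ) (hy : y ≠ 0) (hu : 0 < 2 * q * y - p ^ 2) :
    DOp (Hf α) (DOp (Hf α) (pq (Hf α))) x y p q =
      (6 * α ^ 3 * (2 * q * y - p ^ 2) * Real.sqrt (2 * q * y - p ^ 2)
        - 9 * α ^ 2 * p * (2 * q * y - p ^ 2)
        + 6 * α * p ^ 2 * Real.sqrt (2 * q * y - p ^ 2)
        - 3 * α * q * Real.sqrt (2 * q * y - p ^ 2) * y) / y ^ 3 := by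
  have hs0 : Real.sqrt (2 * q * y - p ^ 2) ≠ 0 := (Real.sqrt_pos.mpr hu).ne'
  have hys := (hder_uy y p q).sqrt hu.ne'
  have hps := (hder_up y p q).sqrt hu.ne'
  have hqs := (hder_uq y p q).sqrt hu.ne'
  have hx0 : px (DOp (Hf α) (pq (Hf α))) x y p q = 0 := by
    simp [px, DOp, py, pp, pq, Hf]
  have hyc : py (DOp (Hf α) (pq (Hf α))) x y p q = py (Cf α) x y p q :=
    py_congr _ _ x y p q hy hu (fun t ht hut => lDA α x t p q ht hut)
  have hpc : pp (DOp (Hf α) (pq (Hf α))) x y p q = pp (Cf α) x y p q :=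
    pp_congr _ _ x y p q hu (fun t hut => lDA α x y t q hy hut)
  have hqc : pq (DOp (Hf α) (pq (Hf α))) x y p q = pq (Cf α) x y p q :=
    pq_congr _ _ x y p q hu (fun t hut => lDA α x y p t hy hut)
  have hCy := ((hys.const_mul (3 * α)).mul ((hys.const_mul α).sub_const p)).div
    (hder_sq y) (pow_ne_zero 2 hy)
  have hCp := (((hps.const_mul (3 * α)).mul ((hps.const_mul α).sub
    (hasDerivAt_id' p)))).div_const (y ^ 2)
  have hCq := ((hqs.const_mul (3 * α)).mul ((hqs.const_mul α).sub_const p)).div_const (y ^ 2)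
  simp only [DOp]
  rw [hx0, hyc, hpc, hqc, lHval α x y p q hu]
  simp only [py, pp, pq, Cf]
  rw [HasDerivAt.deriv (f := fun s => 3 * α * Real.sqrt (2 * q * s - p ^ 2) * (α * Real.sqrt (2 * q * s - p ^ 2) - p) / s ^ 2) hCy,
    HasDerivAt.deriv (f := fun s => 3 * α * Real.sqrt (2 * q * y - s ^ 2) * (α * Real.sqrt (2 * q * y - s ^ 2) - s) / y ^ 2) hCp,
    HasDerivAt.deriv (f := fun s => 3 * α * Real.sqrt (2 * s * y - p ^ 2) * (α * Real.sqrt (2 * s * y - p ^ 2) - p) / y ^ 2) hCq]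
  simp only [Pi.neg_apply, Pi.mul_apply, Pi.sub_apply]
  have h2 : 2 * q * y - p ^ 2 = Real.sqrt (2 * q * y - p ^ 2) ^ 2 := (Real.sq_sqrt hu.le).symm
  set s := Real.sqrt (2 * q * y - p ^ 2) with hsdef
  rw [h2]
  field_simp
  ring

/-- The Wünschmann invariant of `H = α (2qy − p²)^(3/2)/y²` vanishes on the domain
where `y ≠ 0` and `2qy − p² > 0`. -/
theorem wunschmann_example_alpha (α : ℝ) :
    ∀ x y p q : ℝ, y ≠ 0 → 0 < 2 * q * y - p ^ 2 →
      Wun (fun _ y p q => α * (2 * q * y - p ^ 2) ^ ((3 : ℝ) / 2) / y ^ 2) x y p q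
        = 0 := by
  intro x y p q hy hu
  show Wun (Hf α) x y p q = 0
  have hs0 : Real.sqrt (2 * q * y - p ^ 2) ≠ 0 := (Real.sqrt_pos.mpr hu).ne'
  simp only [Wun]
  rw [lDDA α x y p q hy hu, lDB α x y p q hy hu, lDA α x y p q hy hu,
    lHq α x y p q hy, lHp α x y p q hy, lHyv α x y p q hy hu]
  simp only [Af, Bf, Cf]
  have h2 : 2 * q * y - p ^ 2 = Real.sqrt (2 * q * y - p ^ 2) ^ 2 := (Real.sq_sqrt hu.le).symm
  set s := Real.sqrt (2 * q * y - p ^ 2) with hsdef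
  rw [h2]
  field_simp
  linear_combination (108 * α * s) * h2
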